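/- For any positive integers n, n', any binary word y ∈ Z_2^{n'}, and any 1 ≤ i ≤ n'-1: if y_i = y_{i+1} then f_n(y) = f_n(y_{[1,i]}) + f_n(y_{[i+1,n']}) - n; and if y_i ≠ y_{i+1} then f_n(y) = f_n(y_{[1,i]}) + f_n(y_{[i+1,n']}) - t(y_{[1,i]})·h(y_{[i+1,n']}). -/

import Mathlib

open Finset

/-- The (0-indexed, inclusive) segment `x_i,…,x_j` is alternating, i.e. of the
form `abab…` : adjacent symbols differ and the segment has period 2. -/
def IsAltOn {m : ℕ} (x : ℕ → Fin m) (i j : ℕ) : Prop :=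
  (∀ k ∈ Finset.Ico i j, x k ≠ x (k + 1)) ∧ ∀ k ∈ Finset.Ico i (j - 1), x k = x (k + 2)

instance {m : ℕ} (x : ℕ → Fin m) (i j : ℕ) : Decidable (IsAltOn x i j) :=
  inferInstanceAs (Decidable (_ ∧ _))

/-- The set of (0-indexed, inclusive) index pairs of maximal alternating segments
of the word `x_0,…,x_{n-1}`. -/
def altSegs {m : ℕ} (n : ℕ) (x : ℕ → Fin m) : Finset (ℕ × ℕ) :=
  (Finset.range n ×ˢ Finset.range n).filter (fun p => p.1 ≤ p.2 ∧ IsAltOn x p.1 p.2 ∧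
    (p.1 = 0 ∨ ¬ IsAltOn x (p.1 - 1) p.2) ∧ (p.2 = n - 1 ∨ ¬ IsAltOn x p.1 (p.2 + 1)))

/-- `a(x)` : the number of maximal alternating segments of `x_0,…,x_{n-1}`. -/
def aCount {m : ℕ} (n : ℕ) (x : ℕ → Fin m) : ℕ := (altSegs n x).card

/-- `∑ s_i` : the sum of the lengths of the maximal alternating segments. -/
def sumLen {m : ℕ} (n : ℕ) (x : ℕ → Fin m) : ℕ := ∑ p ∈ altSegs n x, (p.2 - p.1 + 1)

/-- `∑ s_i²` : the sum of the squares of the lengths of the maximal alternating segments. -/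
def sumLenSq {m : ℕ} (n : ℕ) (x : ℕ → Fin m) : ℕ := ∑ p ∈ altSegs n x, (p.2 - p.1 + 1) ^ 2

/-- `ρ(x)` : the number of runs of the word `x_0,…,x_{n-1}`. -/
def rho {m : ℕ} (n : ℕ) (x : ℕ → Fin m) : ℕ :=
  1 + ((Finset.range (n - 1)).filter (fun i => x i ≠ x (i + 1))).card

/-- `h(x)` : the length of the first maximal alternating segment of `x_0,…,x_{n-1}`. -/
def headAlt {m : ℕ} (n : ℕ) (x : ℕ → Fin m) : ℕ :=
  ((Finset.range n).filter (fun j => IsAltOn x 0 j)).card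

/-- `t(x)` : the length of the last maximal alternating segment of `x_0,…,x_{n-1}`. -/
def tailAlt {m : ℕ} (n : ℕ) (x : ℕ → Fin m) : ℕ :=
  ((Finset.range n).filter (fun j => IsAltOn x (n - 1 - j) (n - 1))).card

/-- Extend a word of length `n` to a function `ℕ → Fin m` (junk value `0` beyond `n`). -/
def extWord {m : ℕ} (n : ℕ) (hm : 0 < m) (y : Fin n → Fin m) : ℕ → Fin m :=
  fun i => if h : i < n then y ⟨i, h⟩ else ⟨0, hm⟩

/-- The FLL ball of radius 1 around `x` : all words `y` of length `n` sharing with `x`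
a common subsequence of length `n - 1` (equivalently, `d_l(x,y) ≤ 1`). -/
def L1ball {m : ℕ} (n : ℕ) (x : Fin n → Fin m) : Set (Fin n → Fin m) :=
  {y | ∃ z : List (Fin m), z.length = n - 1 ∧ z.Sublist (List.ofFn x) ∧ z.Sublist (List.ofFn y)}

/-- `|L_1(x)|` : the size of the FLL ball of radius 1 around `x`. -/
noncomputable def L1size {m : ℕ} (n : ℕ) (x : Fin n → Fin m) : ℕ := (L1ball n x).ncard

/-- `f_n(y)` for binary words `y` of length `len` : `ρ(y)·n - (1/2)∑ s_j²`. -/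
noncomputable def fB (n len : ℕ) (y : ℕ → Fin 2) : ℝ :=
  (rho len y : ℝ) * n - (sumLenSq len y : ℝ) / 2

/-- `f_{m,n}(y)` for words `y` of length `len` over `Z_m` :
`ρ(y)(mn-n-1) - (1/2)∑ s_j² + (3/2)∑ s_j - a(y)`. -/
noncomputable def fM (m n len : ℕ) (y : ℕ → Fin m) : ℝ :=
  (rho len y : ℝ) * ((m : ℝ) * n - n - 1) - (sumLenSq len y : ℝ) / 2
    + 3 / 2 * (sumLen len y : ℝ) - (aCount len y : ℝ)

lemma fin2_trans {a b c : Fin 2} (h1 : a ≠ b) (h2 : b ≠ c) : a = c := by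
  revert h1 h2; revert a b c; decide

lemma isAltOn_iff (x : ℕ → Fin 2) (i j : ℕ) :
    IsAltOn x i j ↔ ∀ k ∈ Finset.Ico i j, x k ≠ x (k + 1) := by
  constructor
  · exact fun h => h.1
  · intro h
    refine ⟨h, fun k hk => ?_⟩
    simp only [Finset.mem_Ico] at hk
    exact fin2_trans (h k (by simp only [Finset.mem_Ico]; omega))
      (h (k+1) (by simp only [Finset.mem_Ico]; omega))

lemma isAltOn_shift (x : ℕ → Fin 2) (i a b : ℕ) :
    IsAltOn (fun k => x (k + i)) a b ↔ IsAltOn x (a + i) (b + i) := by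
  simp only [isAltOn_iff, Finset.mem_Ico]
  constructor
  · intro h k hk
    have h2 := h (k - i) (by omega)
    have e1 : k - i + i = k := by omega
    have e2 : k - i + 1 + i = k + 1 := by omega
    rw [e1, e2] at h2; exact h2
  · intro h k hk
    have h2 := h (k + i) (by omega)
    have e : k + 1 + i = k + i + 1 := by omega
    rw [e]; exact h2

lemma isAltOn_mono {x : ℕ → Fin 2} {a b a' b' : ℕ} (h : IsAltOn x a b) (ha : a ≤ a')
    (hb : b' ≤ b) : IsAltOn x a' b' := by
  rw [isAltOn_iff] at h ⊢
  intro k hk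
  simp only [Finset.mem_Ico] at hk
  exact h k (by simp only [Finset.mem_Ico]; omega)

lemma mem_altSegs {x : ℕ → Fin 2} {n a b : ℕ} :
    (a, b) ∈ altSegs n x ↔ a < n ∧ b < n ∧ a ≤ b ∧ IsAltOn x a b ∧
      (a = 0 ∨ ¬ IsAltOn x (a-1) b) ∧ (b = n - 1 ∨ ¬ IsAltOn x a (b+1)) := by
  simp only [altSegs, Finset.mem_filter, Finset.mem_product, Finset.mem_range]
  tauto

lemma left_boundary {x : ℕ → Fin 2} {a b : ℕ} (hab : a ≤ b) (h : IsAltOn x a b) (ha : 1 ≤ a)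
    (hmax : ¬ IsAltOn x (a-1) b) : x (a-1) = x a := by
  by_contra hne
  apply hmax
  rw [isAltOn_iff] at h ⊢
  intro k hk
  simp only [Finset.mem_Ico] at hk
  rcases eq_or_lt_of_le hk.1 with he | hl
  · have hk1 : k = a - 1 := he.symm
    subst hk1
    rw [show a - 1 + 1 = a by omega]
    exact hne
  · exact h k (by simp only [Finset.mem_Ico]; omega)

lemma right_boundary {x : ℕ → Fin 2} {a b : ℕ} (hab : a ≤ b) (h : IsAltOn x a b)
    (hmax : ¬ IsAltOn x a (b+1)) : x b = x (b+1) := by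
  by_contra hne
  apply hmax
  rw [isAltOn_iff] at h ⊢
  intro k hk
  simp only [Finset.mem_Ico] at hk
  rcases eq_or_lt_of_le (by omega : k ≤ b) with he | hl
  · subst he; exact hne
  · exact h k (by simp only [Finset.mem_Ico]; omega)

lemma not_isAltOn_left {x : ℕ → Fin 2} {a b : ℕ} (ha : 1 ≤ a) (hab : a ≤ b)
    (he : x (a-1) = x a) : ¬ IsAltOn x (a-1) b := by
  intro h
  have := h.1 (a-1) (by simp only [Finset.mem_Ico]; omega)
  rw [show a - 1 + 1 = a by omega] at this
  exact this he

lemma not_isAltOn_right {x : ℕ → Fin 2} {a b : ℕ} (hab : a ≤ b) (he : x b = x (b+1)) :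
    ¬ IsAltOn x a (b+1) :=
  fun h => h.1 b (by simp only [Finset.mem_Ico]; omega) he
def segA (x : ℕ → Fin 2) (k : ℕ) : ℕ := Nat.findGreatest (fun a => a = 0 ∨ x (a-1) = x a) k

lemma segB_ex (n : ℕ) (x : ℕ → Fin 2) (k : ℕ) : ∃ b, k ≤ b ∧ (n - 1 ≤ b ∨ x b = x (b+1)) :=
  ⟨max k (n-1), le_max_left _ _, Or.inl (le_max_right _ _)⟩

def segB (n : ℕ) (x : ℕ → Fin 2) (k : ℕ) : ℕ := Nat.find (segB_ex n x k)

lemma segA_le (x : ℕ → Fin 2) (k : ℕ) : segA x k ≤ k := Nat.findGreatest_le k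

lemma segA_spec (x : ℕ → Fin 2) (k : ℕ) : segA x k = 0 ∨ x (segA x k - 1) = x (segA x k) := by
  unfold segA
  exact Nat.findGreatest_spec (P := fun a => a = 0 ∨ x (a-1) = x a) (Nat.zero_le k) (Or.inl rfl)

lemma segB_spec' (n : ℕ) (x : ℕ → Fin 2) (k : ℕ) :
    k ≤ segB n x k ∧ (n - 1 ≤ segB n x k ∨ x (segB n x k) = x (segB n x k + 1)) := by
  unfold segB; exact Nat.find_spec (segB_ex n x k)

lemma segB_min {n : ℕ} {x : ℕ → Fin 2} {k m : ℕ} (h : k ≤ m)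
    (h2 : n - 1 ≤ m ∨ x m = x (m+1)) : segB n x k ≤ m := by
  unfold segB; exact Nat.find_min' (segB_ex n x k) ⟨h, h2⟩

lemma segB_le {n : ℕ} {x : ℕ → Fin 2} {k : ℕ} (hk : k ≤ n - 1) : segB n x k ≤ n - 1 :=
  segB_min hk (Or.inl le_rfl)

lemma segA_alt (x : ℕ → Fin 2) (k : ℕ) : IsAltOn x (segA x k) k := by
  rw [isAltOn_iff]
  intro j hj
  simp only [Finset.mem_Ico] at hj
  by_contra he
  have hgt := Nat.findGreatest_is_greatest (P := fun a => a = 0 ∨ x (a-1) = x a) (n := k)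
    (k := j + 1) (by have := hj.1; unfold segA at this; omega) (by omega)
  exact hgt (Or.inr (by simpa using he))

lemma segA_eq {x : ℕ → Fin 2} {a k : ℕ} (hak : a ≤ k) (halt : IsAltOn x a k)
    (hbd : a = 0 ∨ x (a-1) = x a) : segA x k = a := by
  have h1 : a ≤ segA x k := Nat.le_findGreatest hak hbd
  rcases eq_or_lt_of_le h1 with h | h
  · exact h.symm
  · exfalso
    rcases segA_spec x k with h2 | h2
    · omega
    · have h3 := halt.1 (segA x k - 1)
        (by simp only [Finset.mem_Ico]; have := segA_le x k; omega)
      rw [show segA x k - 1 + 1 = segA x k by omega] at h3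
      exact h3 h2

lemma segB_alt (n : ℕ) (x : ℕ → Fin 2) (k : ℕ) : IsAltOn x k (segB n x k) := by
  rw [isAltOn_iff]
  intro j hj
  simp only [Finset.mem_Ico] at hj
  by_contra he
  have := segB_min (n := n) hj.1 (Or.inr he)
  omega

lemma segB_eq {n : ℕ} {x : ℕ → Fin 2} {k b : ℕ} (hkb : k ≤ b) (hb : b ≤ n - 1)
    (halt : IsAltOn x k b) (hbd : b = n - 1 ∨ x b = x (b+1)) : segB n x k = b := by
  have h1 : segB n x k ≤ b := by
    rcases hbd with h | h
    · exact segB_min hkb (Or.inl (by omega))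
    · exact segB_min hkb (Or.inr h)
  rcases eq_or_lt_of_le h1 with h | h
  · exact h
  · exfalso
    obtain ⟨hk1, hk2⟩ := segB_spec' n x k
    rcases hk2 with h2 | h2
    · omega
    · exact halt.1 (segB n x k) (by simp only [Finset.mem_Ico]; omega) h2

lemma phi_mem {n : ℕ} {x : ℕ → Fin 2} (hn : 1 ≤ n) {k : ℕ} (hk : k < n) :
    (segA x k, segB n x k) ∈ altSegs n x := by
  have hk' : k ≤ n - 1 := by omega
  have hA := segA_le x k
  have hB1 := (segB_spec' n x k).1
  have hB2 := segB_le (n := n) (x := x) hk'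
  rw [mem_altSegs]
  refine ⟨by omega, by omega, by omega, ?_, ?_, ?_⟩
  · rw [isAltOn_iff]
    intro j hj
    simp only [Finset.mem_Ico] at hj
    by_cases hjk : j < k
    · exact (isAltOn_iff x _ _).1 (segA_alt x k) j (by simp only [Finset.mem_Ico]; omega)
    · exact (isAltOn_iff x _ _).1 (segB_alt n x k) j (by simp only [Finset.mem_Ico]; omega)
  · by_cases h0 : segA x k = 0
    · exact Or.inl h0
    · right
      rcases segA_spec x k with h | h
      · exact absurd h h0
      · exact not_isAltOn_left (by omega) (by omega) h
  · by_cases h0 : segB n x k = n - 1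
    · exact Or.inl h0
    · right
      rcases (segB_spec' n x k).2 with h | h
      · exact absurd (by omega : segB n x k = n - 1) h0
      · exact not_isAltOn_right (by omega) h

lemma phi_eq {n : ℕ} {x : ℕ → Fin 2} {a b k : ℕ} (hab : (a, b) ∈ altSegs n x)
    (h1 : a ≤ k) (h2 : k ≤ b) : segA x k = a ∧ segB n x k = b := by
  rw [mem_altSegs] at hab
  obtain ⟨han, hbn, haleb, halt, hmaxl, hmaxr⟩ := hab
  constructor
  · apply segA_eq h1 (isAltOn_mono halt le_rfl h2)
    by_cases h0 : a = 0
    · exact Or.inl h0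
    · rcases hmaxl with h | h
      · exact Or.inl h
      · exact Or.inr (left_boundary haleb halt (by omega) h)
  · apply segB_eq h2 (by omega) (isAltOn_mono halt h1 le_rfl)
    rcases hmaxr with h | h
    · exact Or.inl h
    · exact Or.inr (right_boundary haleb halt h)

def pairs (n : ℕ) (x : ℕ → Fin 2) : Finset (ℕ × ℕ) :=
  (Finset.range n ×ˢ Finset.range n).filter (fun p => p.1 ≤ p.2 ∧ IsAltOn x p.1 p.2)

lemma mem_pairs {n : ℕ} {x : ℕ → Fin 2} {k l : ℕ} :
    (k, l) ∈ pairs n x ↔ k < n ∧ l < n ∧ k ≤ l ∧ IsAltOn x k l := by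
  simp only [pairs, Finset.mem_filter, Finset.mem_product, Finset.mem_range]
  tauto

lemma sumLen_eq (n : ℕ) (x : ℕ → Fin 2) (hn : 1 ≤ n) :
    ∑ p ∈ altSegs n x, (p.2 - p.1 + 1) = n := by
  have h2 : ∀ p ∈ altSegs n x,
      ((Finset.range n).filter (fun k => (segA x k, segB n x k) = p)).card
        = p.2 - p.1 + 1 := by
    intro p hp
    obtain ⟨a, b⟩ := p
    have hfiber : (Finset.range n).filter (fun k => (segA x k, segB n x k) = (a, b))
        = Finset.Icc a b := by
      ext k
      simp only [Finset.mem_filter, Finset.mem_range, Finset.mem_Icc, Prod.mk.injEq]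
      constructor
      · rintro ⟨hkn, h1, h2⟩
        have q1 := segA_le x k
        have q2 := (segB_spec' n x k).1
        omega
      · rintro ⟨h1, h2⟩
        have hphi := phi_eq hp h1 h2
        have hbn : b < n := (mem_altSegs.1 hp).2.1
        exact ⟨by omega, hphi.1, hphi.2⟩
    rw [hfiber, Nat.card_Icc]
    have := (mem_altSegs.1 hp).2.2.1
    omega
  calc ∑ p ∈ altSegs n x, (p.2 - p.1 + 1)
      = ∑ p ∈ altSegs n x,
          ((Finset.range n).filter (fun k => (segA x k, segB n x k) = p)).card :=
        Finset.sum_congr rfl (fun p hp => (h2 p hp).symm)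
    _ = (Finset.range n).card :=
        (Finset.card_eq_sum_card_fiberwise
          (fun k hk => phi_mem hn (Finset.mem_range.1 hk))).symm
    _ = n := Finset.card_range n

lemma fiber_sq (n : ℕ) (x : ℕ → Fin 2) (hn : 1 ≤ n) :
    ∀ p ∈ altSegs n x,
      2 * ((pairs n x).filter (fun q => (segA x q.1, segB n x q.1) = p)).card
        = (p.2 - p.1 + 1) ^ 2 + (p.2 - p.1 + 1) := by
  intro p hp
  obtain ⟨a, b⟩ := p
  show 2 * _ = (b - a + 1) ^ 2 + (b - a + 1)
  have hmem := mem_altSegs.1 hp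
  have hab : a ≤ b := hmem.2.2.1
  have hfib : (pairs n x).filter (fun q => (segA x q.1, segB n x q.1) = (a, b))
      = (Finset.Icc a b ×ˢ Finset.Icc a b).filter (fun q => q.1 ≤ q.2) := by
    ext ⟨k, l⟩
    simp only [Finset.mem_filter, Finset.mem_product, Finset.mem_Icc, mem_pairs,
      Prod.mk.injEq]
    constructor
    · rintro ⟨⟨hkn, hln, hkl, halt⟩, h1, h2⟩
      have ha : a ≤ k := by have := segA_le x k; omega
      have hb : k ≤ b := by have := (segB_spec' n x k).1; omega
      have hlb : l ≤ b := by
        by_contra hbl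
        push_neg at hbl
        have hD : x b ≠ x (b+1) := halt.1 b (by simp only [Finset.mem_Ico]; omega)
        rcases hmem.2.2.2.2.2 with hb1 | hb1
        · omega
        · exact hD (right_boundary hab hmem.2.2.2.1 hb1)
      exact ⟨⟨⟨ha, hb⟩, le_trans ha hkl, hlb⟩, hkl⟩
    · rintro ⟨⟨⟨hak, hkb⟩, hal, hlb⟩, hkl⟩
      have hphi := phi_eq hp hak hkb
      have hbn : b < n := hmem.2.1
      exact ⟨⟨by omega, by omega, hkl, isAltOn_mono hmem.2.2.2.1 hak hlb⟩, hphi.1, hphi.2⟩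
  rw [hfib]
  set T := Finset.Icc a b ×ˢ Finset.Icc a b with hT
  have htot : T.card = (b - a + 1) * (b - a + 1) := by
    rw [hT, Finset.card_product, Nat.card_Icc]
    have e : b + 1 - a = b - a + 1 := by omega
    rw [e]
  have hsplit := Finset.card_filter_add_card_filter_not
    (s := T) (p := fun q : ℕ × ℕ => q.1 ≤ q.2)
  have hswap : (T.filter (fun q => ¬ q.1 ≤ q.2)).card
      = (T.filter (fun q => q.1 < q.2)).card := by
    apply Finset.card_nbij' Prod.swap Prod.swap
    · rintro ⟨k, l⟩ hq
      simp only [hT, Finset.mem_coe, Finset.mem_filter, Finset.mem_product, Finset.mem_Icc, Prod.swap] at hq ⊢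
      omega
    · rintro ⟨k, l⟩ hq
      simp only [hT, Finset.mem_coe, Finset.mem_filter, Finset.mem_product, Finset.mem_Icc, Prod.swap] at hq ⊢
      omega
    · rintro ⟨k, l⟩ _; rfl
    · rintro ⟨k, l⟩ _; rfl
  have hle : (T.filter (fun q => q.1 ≤ q.2)).card
      = (T.filter (fun q => q.1 < q.2)).card + (b - a + 1) := by
    have e1 : T.filter (fun q => q.1 ≤ q.2)
        = (T.filter (fun q => q.1 < q.2)) ∪ (T.filter (fun q => q.1 = q.2)) := by
      rw [← Finset.filter_or]
      apply Finset.filter_congr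
      intro q _
      constructor
      · intro h; omega
      · intro h; omega
    have e2 : Disjoint (T.filter (fun q : ℕ × ℕ => q.1 < q.2))
        (T.filter (fun q : ℕ × ℕ => q.1 = q.2)) := by
      apply Finset.disjoint_filter_filter'
      rw [disjoint_iff_inf_le]
      intro q hq
      simp only [Pi.inf_apply, inf_Prop_eq] at hq
      omega
    have e3 : (T.filter (fun q : ℕ × ℕ => q.1 = q.2)).card = b - a + 1 := by
      have e4 : (T.filter (fun q : ℕ × ℕ => q.1 = q.2)).card = (Finset.Icc a b).card := by
        apply Finset.card_nbij' (fun q => q.1) (fun k => (k, k))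
        · rintro ⟨k, l⟩ hq
          simp only [hT, Finset.mem_coe, Finset.mem_filter, Finset.mem_product, Finset.mem_Icc] at hq ⊢
          omega
        · intro k hk
          simp only [Finset.mem_coe, Finset.mem_Icc] at hk
          simp only [hT, Finset.mem_coe, Finset.mem_filter, Finset.mem_product, Finset.mem_Icc]
          exact ⟨⟨⟨hk.1, hk.2⟩, hk.1, hk.2⟩, trivial⟩
        · rintro ⟨k, l⟩ hq
          simp only [hT, Finset.mem_coe, Finset.mem_filter, Finset.mem_product, Finset.mem_Icc] at hq
          have e5 : k = l := hq.2
          simp [e5]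
        · intro k _; rfl
      rw [e4, Nat.card_Icc]
      omega
    rw [e1, Finset.card_union_of_disjoint e2, e3]
  have hpow : (b - a + 1) ^ 2 = (b - a + 1) * (b - a + 1) := by ring
  omega

lemma pairs_card (n : ℕ) (x : ℕ → Fin 2) (hn : 1 ≤ n) :
    2 * (pairs n x).card = sumLenSq n x + n := by
  have h : (pairs n x).card = ∑ p ∈ altSegs n x,
      ((pairs n x).filter (fun q => (segA x q.1, segB n x q.1) = p)).card :=
    Finset.card_eq_sum_card_fiberwise (fun q hq => by
      obtain ⟨k, l⟩ := q
      rw [Finset.mem_coe, mem_pairs] at hq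
      exact phi_mem hn hq.1)
  calc 2 * (pairs n x).card
      = ∑ p ∈ altSegs n x,
          2 * ((pairs n x).filter (fun q => (segA x q.1, segB n x q.1) = p)).card := by
        rw [h, Finset.mul_sum]
    _ = ∑ p ∈ altSegs n x, ((p.2 - p.1 + 1) ^ 2 + (p.2 - p.1 + 1)) :=
        Finset.sum_congr rfl (fiber_sq n x hn)
    _ = sumLenSq n x + n := by
        rw [Finset.sum_add_distrib, sumLen_eq n x hn, sumLenSq]

lemma rho_split (n' i : ℕ) (x : ℕ → Fin 2) (hi : 1 ≤ i) (hi' : i + 1 ≤ n') :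
    rho n' x + 1 = rho i x + rho (n' - i) (fun k => x (k + i)) +
      (if x (i-1) = x i then 0 else 1) := by
  unfold rho
  have hii : i - 1 + 1 = i := by omega
  have h1 : ((Finset.range (n'-1)).filter (fun j => x j ≠ x (j+1))).card
      = ((Finset.range i).filter (fun j => x j ≠ x (j+1))).card
        + ((Finset.Ico i (n'-1)).filter (fun j => x j ≠ x (j+1))).card := by
    rw [← Finset.card_union_of_disjoint (Finset.disjoint_filter_filter
      (by rw [Finset.range_eq_Ico]; exact Finset.Ico_disjoint_Ico_consecutive 0 i (n'-1)))]
    rw [← Finset.filter_union, Finset.range_eq_Ico, Finset.range_eq_Ico,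
      Finset.Ico_union_Ico_eq_Ico (by omega) (by omega)]
  have h2 : ((Finset.range i).filter (fun j => x j ≠ x (j+1))).card
      = ((Finset.range (i-1)).filter (fun j => x j ≠ x (j+1))).card
        + (if x (i-1) = x i then 0 else 1) := by
    have e : i = (i-1) + 1 := by omega
    conv_lhs => rw [e, Finset.range_add_one]
    rw [Finset.filter_insert]
    by_cases h : x (i-1) = x i
    · rw [if_neg (by rw [hii]; exact not_not_intro h), if_pos h]
      omega
    · rw [if_pos (by rw [hii]; exact h), if_neg h,
        Finset.card_insert_of_notMem (by simp [Finset.mem_filter])]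
  have h3 : ((Finset.Ico i (n'-1)).filter (fun j => x j ≠ x (j+1))).card
      = ((Finset.range (n'-i-1)).filter
          (fun j => (fun k => x (k+i)) j ≠ (fun k => x (k+i)) (j+1))).card := by
    apply Finset.card_nbij' (fun j => j - i) (fun j => j + i)
    · intro j hj
      simp only [Finset.mem_coe, Finset.mem_filter, Finset.mem_Ico, Finset.mem_range] at hj ⊢
      obtain ⟨⟨hj1, hj2⟩, hj3⟩ := hj
      refine ⟨by omega, ?_⟩
      have e1 : j - i + i = j := by omega
      have e2 : j - i + 1 + i = j + 1 := by omega
      rw [e1, e2]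
      exact hj3
    · intro j hj
      simp only [Finset.mem_coe, Finset.mem_filter, Finset.mem_Ico, Finset.mem_range] at hj ⊢
      obtain ⟨hj1, hj2⟩ := hj
      refine ⟨⟨by omega, by omega⟩, ?_⟩
      have e2 : j + 1 + i = j + i + 1 := by omega
      rw [e2] at hj2
      exact hj2
    · intro j hj
      simp only [Finset.mem_coe, Finset.mem_filter, Finset.mem_Ico] at hj
      dsimp only
      omega
    · intro j _
      dsimp only
      omega
  simp only [ne_eq, Finset.filter_congr_decidable] at h1 h2 h3 ⊢
  omega

lemma pairs_split (n' i : ℕ) (x : ℕ → Fin 2) (hi : 1 ≤ i) (hi' : i + 1 ≤ n') :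
    (pairs n' x).card = (pairs i x).card + (pairs (n' - i) (fun k => x (k + i))).card +
      (if x (i-1) = x i then 0
       else tailAlt i x * headAlt (n' - i) (fun k => x (k + i))) := by
  have hii : i - 1 + 1 = i := by omega
  set S := pairs n' x with hS
  set L := S.filter (fun p : ℕ × ℕ => p.2 < i) with hL
  set R := S.filter (fun p : ℕ × ℕ => i ≤ p.1) with hR
  set C := S.filter (fun p : ℕ × ℕ => p.1 < i ∧ i ≤ p.2) with hC
  have hpart : S = (L ∪ R) ∪ C := by
    ext ⟨k, l⟩
    simp only [hL, hR, hC, Finset.mem_union, Finset.mem_filter]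
    constructor
    · intro h
      have hkl : k ≤ l := (mem_pairs.1 h).2.2.1
      by_cases h1 : l < i
      · exact Or.inl (Or.inl ⟨h, h1⟩)
      · by_cases h2 : i ≤ k
        · exact Or.inl (Or.inr ⟨h, h2⟩)
        · exact Or.inr ⟨h, by omega, by omega⟩
    · rintro ((⟨h, _⟩ | ⟨h, _⟩) | ⟨h, _⟩) <;> exact h
  have hdLR : Disjoint L R := by
    rw [Finset.disjoint_left]
    rintro ⟨k, l⟩ hp hq
    simp only [hL, hR, Finset.mem_filter] at hp hq
    have := (mem_pairs.1 hp.1).2.2.1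
    omega
  have hdC : Disjoint (L ∪ R) C := by
    rw [Finset.disjoint_left]
    rintro ⟨k, l⟩ hp hq
    simp only [hL, hR, hC, Finset.mem_union, Finset.mem_filter] at hp hq
    rcases hp with hp | hp <;> omega
  have hleft : L = pairs i x := by
    ext ⟨k, l⟩
    simp only [hL, hS, Finset.mem_filter, mem_pairs]
    constructor
    · rintro ⟨⟨hkn, hln, hkl, halt⟩, h1⟩
      exact ⟨by omega, by omega, hkl, halt⟩
    · rintro ⟨hk, hl, hkl, halt⟩
      exact ⟨⟨by omega, by omega, hkl, halt⟩, by omega⟩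
  have hright : R.card = (pairs (n' - i) (fun k => x (k + i))).card := by
    apply Finset.card_nbij' (fun p => (p.1 - i, p.2 - i)) (fun p => (p.1 + i, p.2 + i))
    · rintro ⟨k, l⟩ hp
      simp only [hR, hS, Finset.mem_coe, Finset.mem_filter, mem_pairs] at hp ⊢
      obtain ⟨⟨hkn, hln, hkl, halt⟩, hik⟩ := hp
      refine ⟨by omega, by omega, by omega, ?_⟩
      rw [isAltOn_shift]
      have e1 : k - i + i = k := by omega
      have e2 : l - i + i = l := by omega
      rw [e1, e2]
      exact halt
    · rintro ⟨k, l⟩ hp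
      simp only [hR, hS, Finset.mem_coe, Finset.mem_filter, mem_pairs] at hp ⊢
      obtain ⟨hkn, hln, hkl, halt⟩ := hp
      rw [isAltOn_shift] at halt
      exact ⟨⟨by omega, by omega, by omega, halt⟩, by omega⟩
    · rintro ⟨k, l⟩ hp
      simp only [hR, hS, Finset.mem_coe, Finset.mem_filter, mem_pairs] at hp
      simp only [Prod.mk.injEq]
      omega
    · rintro ⟨k, l⟩ _
      simp only [Prod.mk.injEq]
      omega
  have hcross : C.card = (if x (i-1) = x i then 0
      else tailAlt i x * headAlt (n' - i) (fun k => x (k + i))) := by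
    by_cases hc : x (i-1) = x i
    · rw [if_pos hc, Finset.card_eq_zero]
      apply Finset.eq_empty_of_forall_notMem
      rintro ⟨k, l⟩ hp
      simp only [hC, hS, Finset.mem_filter, mem_pairs] at hp
      obtain ⟨⟨hkn, hln, hkl, halt⟩, hki, hil⟩ := hp
      have := halt.1 (i-1) (by simp only [Finset.mem_Ico]; omega)
      rw [hii] at this
      exact this hc
    · rw [if_neg hc]
      have hprod : C = ((Finset.range i).filter (fun k => IsAltOn x k (i-1)))
          ×ˢ ((Finset.Ico i n').filter (fun l => IsAltOn x i l)) := by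
        ext ⟨k, l⟩
        simp only [hC, hS, Finset.mem_filter, mem_pairs, Finset.mem_product,
          Finset.mem_range, Finset.mem_Ico]
        constructor
        · rintro ⟨⟨hkn, hln, hkl, halt⟩, hki, hil⟩
          exact ⟨⟨hki, isAltOn_mono halt le_rfl (by omega)⟩,
            ⟨hil, hln⟩, isAltOn_mono halt (by omega) le_rfl⟩
        · rintro ⟨⟨hki, haltL⟩, ⟨hil, hln⟩, haltR⟩
          refine ⟨⟨by omega, hln, by omega, ?_⟩, hki, hil⟩
          rw [isAltOn_iff] at haltL haltR ⊢
          intro j hj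
          simp only [Finset.mem_Ico] at hj
          rcases lt_trichotomy j (i-1) with h | h | h
          · exact haltL j (by simp only [Finset.mem_Ico]; omega)
          · subst h
            rw [hii]
            exact hc
          · exact haltR j (by simp only [Finset.mem_Ico]; omega)
      rw [hprod, Finset.card_product]
      congr 1
      · -- tailAlt
        unfold tailAlt
        apply Finset.card_nbij' (fun k => i - 1 - k) (fun j => i - 1 - j)
        · intro k hk
          simp only [Finset.mem_coe, Finset.mem_filter, Finset.mem_range] at hk ⊢
          refine ⟨by omega, ?_⟩
          rw [show i - 1 - (i - 1 - k) = k by omega]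
          exact hk.2
        · intro j hj
          simp only [Finset.mem_coe, Finset.mem_filter, Finset.mem_range] at hj ⊢
          exact ⟨by omega, hj.2⟩
        · intro k hk
          simp only [Finset.mem_coe, Finset.mem_filter, Finset.mem_range] at hk
          dsimp only
          omega
        · intro j hj
          simp only [Finset.mem_coe, Finset.mem_filter, Finset.mem_range] at hj
          dsimp only
          omega
      · -- headAlt
        unfold headAlt
        apply Finset.card_nbij' (fun l => l - i) (fun j => j + i)
        · intro l hl
          simp only [Finset.mem_coe, Finset.mem_filter, Finset.mem_Ico, Finset.mem_range] at hl ⊢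
          obtain ⟨⟨h1, h2⟩, h3⟩ := hl
          refine ⟨by omega, ?_⟩
          rw [isAltOn_shift]
          rw [show (0:ℕ) + i = i by omega, show l - i + i = l by omega]
          exact h3
        · intro j hj
          simp only [Finset.mem_coe, Finset.mem_filter, Finset.mem_Ico, Finset.mem_range] at hj ⊢
          obtain ⟨h1, h2⟩ := hj
          rw [isAltOn_shift, show (0:ℕ) + i = i by omega] at h2
          exact ⟨⟨by omega, by omega⟩, h2⟩
        · intro l hl
          simp only [Finset.mem_coe, Finset.mem_filter, Finset.mem_Ico] at hl
          dsimp only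
          omega
        · intro j _
          dsimp only
          omega
  rw [hpart, Finset.card_union_of_disjoint hdC, Finset.card_union_of_disjoint hdLR,
    hleft, hright, hcross]

lemma fB_split (n n' : ℕ) (hn : 1 ≤ n) (hn' : 1 ≤ n') (x : ℕ → Fin 2)
    (i : ℕ) (hi : 1 ≤ i) (hi' : i ≤ n' - 1) :
    (x (i - 1) = x i →
      fB n n' x = fB n i x + fB n (n' - i) (fun k => x (k + i)) - n)
    ∧ (x (i - 1) ≠ x i →
      fB n n' x = fB n i x + fB n (n' - i) (fun k => x (k + i))
        - (tailAlt i x : ℝ) * (headAlt (n' - i) (fun k => x (k + i)) : ℝ)) := by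
  have hi2 : i + 1 ≤ n' := by omega
  have hP := pairs_card n' x (by omega)
  have hPi := pairs_card i x hi
  have hPr := pairs_card (n' - i) (fun k => x (k + i)) (by omega)
  have hR := rho_split n' i x hi hi2
  have hS := pairs_split n' i x hi hi2
  have c0 : ((n' - i : ℕ) : ℝ) = (n' : ℝ) - (i : ℝ) := by
    rw [Nat.cast_sub (by omega)]
  constructor
  · intro hc
    rw [if_pos hc] at hR hS
    unfold fB
    have c1 := congrArg (Nat.cast : ℕ → ℝ) hP
    have c2 := congrArg (Nat.cast : ℕ → ℝ) hPi
    have c3 := congrArg (Nat.cast : ℕ → ℝ) hPr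
    have c4 := congrArg (Nat.cast : ℕ → ℝ) hR
    have c5 := congrArg (Nat.cast : ℕ → ℝ) hS
    push_cast at c1 c2 c3 c4 c5
    rw [c0] at c3
    linear_combination (n : ℝ) * c4 + c1/2 - c2/2 - c3/2 - c5
  · intro hc
    rw [if_neg hc] at hR hS
    unfold fB
    have c1 := congrArg (Nat.cast : ℕ → ℝ) hP
    have c2 := congrArg (Nat.cast : ℕ → ℝ) hPi
    have c3 := congrArg (Nat.cast : ℕ → ℝ) hPr
    have c4 := congrArg (Nat.cast : ℕ → ℝ) hR
    have c5 := congrArg (Nat.cast : ℕ → ℝ) hS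
    push_cast at c1 c2 c3 c4 c5
    rw [c0] at c3
    linear_combination (n : ℝ) * c4 + c1/2 - c2/2 - c3/2 - c5


/-- Splitting formula for `f_n` on binary words: for `y ∈ Z_2^{n'}` and `1 ≤ i ≤ n'-1`,
if `y_i = y_{i+1}` then `f_n(y) = f_n(y_{[1,i]}) + f_n(y_{[i+1,n']}) - n`, and if
`y_i ≠ y_{i+1}` then `f_n(y) = f_n(y_{[1,i]}) + f_n(y_{[i+1,n']}) - t(y_{[1,i]})·h(y_{[i+1,n']})`. -/
theorem stmt9 (n n' : ℕ) (hn : 1 ≤ n) (hn' : 1 ≤ n') (y : Fin n' → Fin 2)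
    (i : ℕ) (hi : 1 ≤ i) (hi' : i ≤ n' - 1) :
    (extWord n' (by omega) y (i - 1) = extWord n' (by omega) y i →
      fB n n' (extWord n' (by omega) y)
        = fB n i (extWord n' (by omega) y)
            + fB n (n' - i) (fun k => extWord n' (by omega) y (k + i)) - n)
    ∧ (extWord n' (by omega) y (i - 1) ≠ extWord n' (by omega) y i →
      fB n n' (extWord n' (by omega) y)
        = fB n i (extWord n' (by omega) y)
            + fB n (n' - i) (fun k => extWord n' (by omega) y (k + i))
            - (tailAlt i (extWord n' (by omega) y) : ℝ)
                * (headAlt (n' - i) (fun k => extWord n' (by omega) y (k + i)) : ℝ)) := by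
  exact fB_split n n' hn hn' (extWord n' (by omega) y) i hi hi'
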